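/- Let $(\widehat{M}_n)_{n\ge0}$ be a sequence of positive numbers with $\widehat{M}_0=1$ and $\lim_{n\to\infty}\widehat{M}_n^{1/n}=\infty$, and let $m$ be a positive integer. Define $f(y)=\sum_{n=0}^{\infty}y^{mn}/\widehat{M}_n$ for $y>0$ (the series converges and may be differentiated term by term). Then $\lim_{y\to\infty}\dfrac{y\,f'(y)}{f(y)}=\infty$. -/

import Mathlib

open Filter

lemma aux_summable (Mh : ℕ → ℝ) (hMpos : ∀ n, 0 < Mh n)
    (hlim : Tendsto (fun n : ℕ => Mh n ^ (1 / (n : ℝ))) atTop atTop)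
    (c : ℝ) (hc : 0 ≤ c) : Summable (fun n : ℕ => ((n : ℝ) + 1) * c ^ n / Mh n) := by
  have h2c : (0:ℝ) < 2 * c + 1 := by linarith
  obtain ⟨N, hN⟩ := (hlim.eventually_ge_atTop (2 * c + 1)).exists_forall_of_atTop
  set r : ℝ := c / (2 * c + 1) with hr
  have hr0 : 0 ≤ r := div_nonneg hc h2c.le
  have hr1 : r < 1 := by
    rw [hr, div_lt_one h2c]; linarith
  have hg : Summable (fun n : ℕ => ((n : ℝ) + 1) * r ^ n) := by
    have h1 : Summable (fun n : ℕ => (n : ℝ) ^ 1 * r ^ n) :=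
      summable_pow_mul_geometric_of_norm_lt_one 1 (by rwa [Real.norm_eq_abs, abs_of_nonneg hr0])
    have h2 : Summable (fun n : ℕ => r ^ n) := summable_geometric_of_lt_one hr0 hr1
    simpa [add_mul, pow_one] using h1.add h2
  apply summable_of_isBigO_nat hg
  rw [Asymptotics.isBigO_iff]
  refine ⟨1, ?_⟩
  filter_upwards [eventually_ge_atTop (max N 1)] with n hn
  have hnN : N ≤ n := le_trans (le_max_left _ _) hn
  have hn1 : 1 ≤ n := le_trans (le_max_right _ _) hn
  have hn0 : (n : ℝ) ≠ 0 := by positivity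
  have hMn : (2 * c + 1) ^ n ≤ Mh n := by
    have h1 := hN n hnN
    have h2 : ((2*c+1) : ℝ) ^ (n : ℝ) ≤ (Mh n ^ (1 / (n : ℝ))) ^ (n : ℝ) :=
      Real.rpow_le_rpow h2c.le h1 (by positivity)
    rw [← Real.rpow_natCast (2*c+1) n]
    rwa [← Real.rpow_mul (hMpos n).le, one_div_mul_cancel hn0, Real.rpow_one] at h2
  have hpow : (0:ℝ) < (2 * c + 1) ^ n := by positivity
  have hb : ((n : ℝ) + 1) * c ^ n / Mh n ≤ ((n : ℝ) + 1) * r ^ n := by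
    calc ((n : ℝ) + 1) * c ^ n / Mh n ≤ ((n : ℝ) + 1) * c ^ n / (2 * c + 1) ^ n :=
          div_le_div_of_nonneg_left (by positivity) hpow hMn
      _ = ((n : ℝ) + 1) * r ^ n := by rw [hr, div_pow, mul_div_assoc]
  have hnne : 0 ≤ ((n : ℝ) + 1) * c ^ n / Mh n := div_nonneg (by positivity) (hMpos n).le
  rw [Real.norm_eq_abs, Real.norm_eq_abs, abs_of_nonneg hnne,
    abs_of_nonneg (mul_nonneg (by positivity) (pow_nonneg hr0 n)), one_mul]
  exact hb

lemma aux_summable_a (Mh : ℕ → ℝ) (hMpos : ∀ n, 0 < Mh n)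
    (hlim : Tendsto (fun n : ℕ => Mh n ^ (1 / (n : ℝ))) atTop atTop)
    (m : ℕ) (y : ℝ) (hy : 0 ≤ y) : Summable (fun n : ℕ => y ^ (m * n) / Mh n) := by
  refine Summable.of_nonneg_of_le (f := fun (n : ℕ) => ((n : ℝ) + 1) * (y ^ m) ^ n / Mh n)
    (fun (n : ℕ) => div_nonneg (by positivity) (hMpos n).le) (fun n => ?_)
    (aux_summable Mh hMpos hlim (y ^ m) (by positivity))
  rw [pow_mul]
  apply (div_le_div_iff_of_pos_right (hMpos n)).mpr
  nlinarith [pow_nonneg (pow_nonneg hy m) n, Nat.cast_nonneg (α := ℝ) n]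

lemma aux_summable_b (Mh : ℕ → ℝ) (hMpos : ∀ n, 0 < Mh n)
    (hlim : Tendsto (fun n : ℕ => Mh n ^ (1 / (n : ℝ))) atTop atTop)
    (m : ℕ) (y : ℝ) (hy : 0 ≤ y) :
    Summable (fun n : ℕ => ((m * n : ℕ) : ℝ) * y ^ (m * n) / Mh n) := by
  refine Summable.of_nonneg_of_le
    (f := fun (n : ℕ) => (m : ℝ) * (((n : ℝ) + 1) * (y ^ m) ^ n / Mh n))
    (fun (n : ℕ) => div_nonneg (mul_nonneg (by positivity) (by positivity)) (hMpos n).le)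
    (fun n => ?_)
    ((aux_summable Mh hMpos hlim (y ^ m) (by positivity)).mul_left (m : ℝ))
  show ((m * n : ℕ) : ℝ) * y ^ (m * n) / Mh n ≤ (m : ℝ) * (((n : ℝ) + 1) * (y ^ m) ^ n / Mh n)
  rw [pow_mul, ← mul_div_assoc, ← mul_assoc]
  apply (div_le_div_iff_of_pos_right (hMpos n)).mpr
  have h1 : ((m * n : ℕ) : ℝ) ≤ (m : ℝ) * ((n : ℝ) + 1) := by
    push_cast; nlinarith [Nat.cast_nonneg (α := ℝ) m]
  nlinarith [pow_nonneg (pow_nonneg hy m) n, Nat.cast_nonneg (α := ℝ) m,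
    Nat.cast_nonneg (α := ℝ) n, mul_nonneg (Nat.cast_nonneg (α := ℝ) m) (Nat.cast_nonneg (α := ℝ) n)]

lemma aux_deriv (Mh : ℕ → ℝ) (hMpos : ∀ n, 0 < Mh n)
    (hlim : Tendsto (fun n : ℕ => Mh n ^ (1 / (n : ℝ))) atTop atTop)
    (m : ℕ) (y : ℝ) (hy : 0 < y) :
    HasDerivAt (fun t : ℝ => ∑' n, t ^ (m * n) / Mh n)
      (∑' n, ((m * n : ℕ) : ℝ) * y ^ (m * n - 1) / Mh n) y := by
  have hR : (1:ℝ) ≤ y + 1 := by linarith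
  refine hasDerivAt_tsum_of_isPreconnected
    (u := fun (n : ℕ) => (m : ℝ) * (((n : ℝ) + 1) * ((y+1) ^ m) ^ n / Mh n))
    (t := Set.Ioo (0:ℝ) (y+1))
    (g' := fun (n : ℕ) (x : ℝ) => ((m * n : ℕ) : ℝ) * x ^ (m * n - 1) / Mh n)
    ((aux_summable Mh hMpos hlim ((y+1) ^ m) (by positivity)).mul_left (m : ℝ))
    isOpen_Ioo isPreconnected_Ioo
    (fun n x _ => (hasDerivAt_pow (m * n) x).div_const (Mh n))
    (fun n x hx => ?_) (Set.mem_Ioo.mpr ⟨hy, by linarith⟩)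
    (aux_summable_a Mh hMpos hlim m y hy.le) (Set.mem_Ioo.mpr ⟨hy, by linarith⟩)
  obtain ⟨hx0, hx1⟩ := Set.mem_Ioo.mp hx
  have hb : ((m * n : ℕ) : ℝ) * x ^ (m * n - 1) / Mh n
      ≤ (m : ℝ) * (((n : ℝ) + 1) * ((y+1) ^ m) ^ n / Mh n) := by
    rw [← mul_div_assoc, ← mul_assoc]
    apply (div_le_div_iff_of_pos_right (hMpos n)).mpr
    have hxy : x ^ (m * n - 1) ≤ (y + 1) ^ (m * n) := by
      calc x ^ (m * n - 1) ≤ (y + 1) ^ (m * n - 1) :=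
            pow_le_pow_left₀ hx0.le (by linarith) _
        _ ≤ (y + 1) ^ (m * n) := pow_le_pow_right₀ hR (Nat.sub_le _ _)
    have h1 : ((m * n : ℕ) : ℝ) ≤ (m : ℝ) * ((n : ℝ) + 1) := by
      push_cast; nlinarith [Nat.cast_nonneg (α := ℝ) m]
    rw [← pow_mul]
    have h2 : (0:ℝ) ≤ (m * n : ℕ) := Nat.cast_nonneg _
    have h3 : (0:ℝ) ≤ x ^ (m * n - 1) := by positivity
    have h4 : (0:ℝ) ≤ (m : ℝ) * ((n : ℝ) + 1) := by positivity
    calc ((m * n : ℕ) : ℝ) * x ^ (m * n - 1) ≤ ((m * n : ℕ) : ℝ) * (y+1) ^ (m*n) :=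
          mul_le_mul_of_nonneg_left hxy h2
      _ ≤ (m : ℝ) * ((n : ℝ) + 1) * (y+1) ^ (m*n) :=
          mul_le_mul_of_nonneg_right h1 (by positivity)
  rw [Real.norm_eq_abs, abs_of_nonneg (div_nonneg (by positivity) (hMpos n).le)]
  exact hb


/-- `y f'(y)/f(y) → ∞` as `y → ∞` for `f(y) = ∑ y^{mn}/M̂_n`. -/
theorem stmt9 (Mh : ℕ → ℝ) (hMpos : ∀ n, 0 < Mh n) (hM0 : Mh 0 = 1)
    (hlim : Filter.Tendsto (fun n : ℕ => Mh n ^ (1 / (n : ℝ))) Filter.atTop Filter.atTop)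
    (m : ℕ) (hm : 1 ≤ m) :
    Filter.Tendsto
      (fun y : ℝ =>
        y * deriv (fun t : ℝ => ∑' n, t ^ (m * n) / Mh n) y /
          (∑' n, y ^ (m * n) / Mh n))
      Filter.atTop Filter.atTop := by
  rw [tendsto_atTop]
  intro C
  set N : ℕ := 2 * ⌈C⌉₊ + 2 with hNdef
  have hN1 : 1 ≤ N := by omega
  set K : ℝ := ∑ n ∈ Finset.range N, 1 / Mh n with hKdef
  have hK0 : 0 < K := Finset.sum_pos (fun n _ => div_pos one_pos (hMpos n))
    (Finset.nonempty_range_iff.mpr (by omega))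
  filter_upwards [eventually_ge_atTop (1:ℝ), eventually_ge_atTop (2 * K * Mh N)]
    with y hy1 hy2
  have hy0 : (0:ℝ) < y := lt_of_lt_of_le one_pos hy1
  have hSa := aux_summable_a Mh hMpos hlim m y hy0.le
  have hSb := aux_summable_b Mh hMpos hlim m y hy0.le
  set F : ℝ := ∑' n, y ^ (m * n) / Mh n with hFdef
  set B : ℝ := ∑' n, ((m * n : ℕ) : ℝ) * y ^ (m * n) / Mh n with hBdef
  -- F ≥ 1
  have hF1 : (1:ℝ) ≤ F := by
    have := Summable.le_tsum hSa 0 (fun j _ => div_nonneg (by positivity) (hMpos j).le)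
    simpa [hM0] using this
  have hFpos : (0:ℝ) < F := lt_of_lt_of_le one_pos hF1
  -- y * deriv f y = B
  have hyd : y * deriv (fun t : ℝ => ∑' n, t ^ (m * n) / Mh n) y = B := by
    rw [(aux_deriv Mh hMpos hlim m y hy0).deriv, ← tsum_mul_left]
    apply tsum_congr
    intro n
    rcases Nat.eq_zero_or_pos (m * n) with h | h
    · simp [h]
    · have hk : y * y ^ (m * n - 1) = y ^ (m * n) := by
        conv_rhs => rw [← Nat.sub_add_cancel h]
        rw [pow_succ']
      rw [show y * (((m * n : ℕ) : ℝ) * y ^ (m * n - 1) / Mh n)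
          = ((m * n : ℕ) : ℝ) * (y * y ^ (m * n - 1)) / Mh n by ring, hk]
  rw [hyd]
  -- tail decomposition
  set S : ℝ := ∑ n ∈ Finset.range N, y ^ (m * n) / Mh n with hSdef
  have hFS : S + ∑' k, y ^ (m * (k + N)) / Mh (k + N) = F := Summable.sum_add_tsum_nat_add N hSa
  set T : ℝ := ∑' k, y ^ (m * (k + N)) / Mh (k + N) with hTdef
  -- B ≥ mN * T
  have hBT : ((m * N : ℕ) : ℝ) * T ≤ B := by
    have hsum1 : Summable (fun k => y ^ (m * (k + N)) / Mh (k + N)) :=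
      (summable_nat_add_iff (f := fun n => y ^ (m * n) / Mh n) N).mpr hSa
    have hsum2 : Summable (fun k => ((m * (k + N) : ℕ) : ℝ) * y ^ (m * (k + N)) / Mh (k + N)) :=
      (summable_nat_add_iff (f := fun n => ((m * n : ℕ) : ℝ) * y ^ (m * n) / Mh n) N).mpr hSb
    have h1 : ((m * N : ℕ) : ℝ) * T
        ≤ ∑' k, ((m * (k + N) : ℕ) : ℝ) * y ^ (m * (k + N)) / Mh (k + N) := by
      rw [hTdef, ← tsum_mul_left]
      apply Summable.tsum_le_tsum _ (hsum1.mul_left _) hsum2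
      intro k
      rw [← mul_div_assoc]
      apply (div_le_div_iff_of_pos_right (hMpos _)).mpr
      apply mul_le_mul_of_nonneg_right _ (by positivity)
      exact_mod_cast Nat.mul_le_mul_left m (by omega)
    refine h1.trans ?_
    have h2 := Summable.sum_add_tsum_nat_add (f := fun n => ((m * n : ℕ) : ℝ) * y ^ (m * n) / Mh n) N hSb
    rw [hBdef, ← h2]
    have h3 : (0:ℝ) ≤ ∑ n ∈ Finset.range N, ((m * n : ℕ) : ℝ) * y ^ (m * n) / Mh n :=
      Finset.sum_nonneg (fun n _ => div_nonneg (by positivity) (hMpos n).le)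
    linarith
  -- S ≤ K * y ^ (m * (N - 1))
  have hSK : S ≤ K * y ^ (m * (N - 1)) := by
    rw [hSdef, hKdef, Finset.sum_mul]
    apply Finset.sum_le_sum
    intro n hn
    rw [div_mul_eq_mul_div, one_mul]
    apply (div_le_div_iff_of_pos_right (hMpos n)).mpr
    apply pow_le_pow_right₀ hy1
    have := Finset.mem_range.mp hn
    exact Nat.mul_le_mul_left m (by omega)
  -- F ≥ y^(mN)/Mh N ≥ 2K y^(m(N-1))
  have hFl : y ^ (m * N) / Mh N ≤ F :=
    Summable.le_tsum hSa N (fun j _ => div_nonneg (by positivity) (hMpos j).le)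
  have hym : 2 * K * Mh N ≤ y ^ m := le_trans hy2 (le_self_pow₀ hy1 (by omega))
  have hF2 : 2 * K * y ^ (m * (N - 1)) ≤ F := by
    have hsplit : y ^ (m * N) = y ^ (m * (N - 1)) * y ^ m := by
      have he : m * N = m * (N - 1) + m := by
        conv_lhs => rw [← Nat.sub_add_cancel hN1]
        rw [Nat.mul_add, Nat.mul_one]
      rw [he, pow_add]
    have h4 : 2 * K * y ^ (m * (N - 1)) ≤ y ^ (m * N) / Mh N := by
      rw [hsplit, le_div_iff₀ (hMpos N)]
      have hp : (0:ℝ) ≤ y ^ (m * (N - 1)) := by positivity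
      nlinarith [hMpos N]
    linarith
  -- conclude
  have hS2 : 2 * S ≤ F := by nlinarith
  have hTF : F / 2 ≤ T := by linarith
  have hCN : C ≤ (⌈C⌉₊ : ℝ) := Nat.le_ceil C
  have hmN : (2 * (⌈C⌉₊ : ℝ) + 2) ≤ ((m * N : ℕ) : ℝ) := by
    have : N ≤ m * N := Nat.le_mul_of_pos_left N (by omega)
    have h5 : ((N : ℕ) : ℝ) ≤ ((m * N : ℕ) : ℝ) := by exact_mod_cast this
    rw [hNdef] at h5 ⊢; push_cast at h5 ⊢; linarith
  rw [le_div_iff₀ hFpos]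
  have hmN0 : (0:ℝ) ≤ ((m * N : ℕ) : ℝ) := Nat.cast_nonneg _
  calc C * F ≤ ((m * N : ℕ) : ℝ) / 2 * F := by nlinarith
    _ ≤ ((m * N : ℕ) : ℝ) * T := by nlinarith
    _ ≤ B := hBT
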